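/- Let H(x,y) = y²/2 − x²/2 + x⁴/4. Then (−3xy)·(−3xy·dH + d(xy³)) = (8x²y² − 4H·x² − x² + y²)·dH + dR for some polynomial R(x,y), where H is substituted by its polynomial expression. -/

import Mathlib

noncomputable def pdx (F : ℝ → ℝ → ℝ) (x y : ℝ) : ℝ := deriv (fun t => F t y) x
noncomputable def pdy (F : ℝ → ℝ → ℝ) (x y : ℝ) : ℝ := deriv (fun t => F x t) y

noncomputable def H (x y : ℝ) : ℝ := y^2/2 - x^2/2 + x^4/4

/-- evaluation at (x,y) of the partial derivative ∂R/∂x of a real polynomial R(x,y) -/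
noncomputable def Rx (R : MvPolynomial (Fin 2) ℝ) (x y : ℝ) : ℝ :=
  MvPolynomial.eval ![x, y] (MvPolynomial.pderiv 0 R)

/-- evaluation at (x,y) of the partial derivative ∂R/∂y of a real polynomial R(x,y) -/
noncomputable def Ry (R : MvPolynomial (Fin 2) ℝ) (x y : ℝ) : ℝ :=
  MvPolynomial.eval ![x, y] (MvPolynomial.pderiv 1 R)

open MvPolynomial in
noncomputable def myR : MvPolynomial (Fin 2) ℝ :=
  C (1/2) * X 0 ^ 6 * X 1 ^ 2 - X 0 ^ 4 * X 1 ^ 2 + C (1/2) * X 0 ^ 2 * X 1 ^ 2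
  - C (3/2) * X 0 ^ 2 * X 1 ^ 4 + C (1/10) * X 0 ^ 10 - C (3/8) * X 0 ^ 8
  + C (1/2) * X 0 ^ 6 - C (1/4) * X 0 ^ 4 - C (1/4) * X 1 ^ 4

/-- Lemma 3(a), eight loop: (−3xy)·(−3xy·dH + d(xy³)) = (8x²y² − 4Hx² − x² + y²)·dH + dR -/
theorem rel_exact : ∃ R : MvPolynomial (Fin 2) ℝ, ∀ x y : ℝ,
    (-3*x*y) * ((-3*x*y) * pdx H x y + pdx (fun x y => x * y^3) x y)
      = (8*x^2*y^2 - 4 * H x y * x^2 - x^2 + y^2) * pdx H x y + Rx R x y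
  ∧ (-3*x*y) * ((-3*x*y) * pdy H x y + pdy (fun x y => x * y^3) x y)
      = (8*x^2*y^2 - 4 * H x y * x^2 - x^2 + y^2) * pdy H x y + Ry R x y := by
  refine ⟨myR, fun x y => ?_⟩
  have hHx : pdx H x y = -x + x^3 := by
    have h : HasDerivAt (fun t : ℝ => y^2/2 - t^2/2 + t^4/4) (-x + x^3) x := by
      have h2 := (hasDerivAt_pow 2 x).div_const 2
      have h4 := (hasDerivAt_pow 4 x).div_const 4
      have := ((hasDerivAt_const x (y^2/2)).sub h2).add h4
      exact this.congr_deriv (by norm_num)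
    simpa [pdx, H] using h.deriv
  have hHy : pdy H x y = y := by
    have h : HasDerivAt (fun t : ℝ => t^2/2 - x^2/2 + x^4/4) y y := by
      have h2 := (hasDerivAt_pow 2 y).div_const 2
      have := (h2.sub (hasDerivAt_const y (x^2/2))).add_const (x^4/4)
      exact this.congr_deriv (by norm_num)
    simpa [pdy, H] using h.deriv
  have hGx : pdx (fun x y => x * y^3) x y = y^3 := by
    have h : HasDerivAt (fun t : ℝ => t * y^3) (y^3) x := by
      exact ((hasDerivAt_id x).mul_const (y^3)).congr_deriv (one_mul _)
    rw [← h.deriv]; rfl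
  have hGy : pdy (fun x y => x * y^3) x y = 3*x*y^2 := by
    have h : HasDerivAt (fun t : ℝ => x * t^3) (3*x*y^2) y := by
      have := (hasDerivAt_pow 3 y).const_mul x
      exact this.congr_deriv (by push_cast; ring)
    simpa [pdy] using h.deriv
  constructor
  · rw [hHx, hGx]
    simp only [Rx, myR, map_add, map_sub, map_mul, Derivation.leibniz_pow, MvPolynomial.pderiv_C,
      MvPolynomial.pderiv_X_self, MvPolynomial.pderiv_X, Pi.single_eq_of_ne,
      MvPolynomial.eval_add, MvPolynomial.eval_sub, MvPolynomial.eval_mul,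
      MvPolynomial.eval_pow, MvPolynomial.eval_C, MvPolynomial.eval_X,
      Matrix.cons_val_zero, Matrix.cons_val_one, Matrix.head_cons, H]
    norm_num
    ring
  · rw [hHy, hGy]
    simp only [Ry, myR, map_add, map_sub, map_mul, Derivation.leibniz_pow, MvPolynomial.pderiv_C,
      MvPolynomial.pderiv_X_self, MvPolynomial.pderiv_X, Pi.single_eq_of_ne,
      MvPolynomial.eval_add, MvPolynomial.eval_sub, MvPolynomial.eval_mul,
      MvPolynomial.eval_pow, MvPolynomial.eval_C, MvPolynomial.eval_X,
      Matrix.cons_val_zero, Matrix.cons_val_one, Matrix.head_cons, H]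
    norm_num
    ring
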